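/- Let C be an additive category with biproducts and let g : B → C be a morphism, X an object, t : X → C a morphism. If the induced morphism (g, t) : B ⊕ X → C is a split epimorphism and C is indecomposable with local endomorphism ring, then g is a split epimorphism or t is a split epimorphism. -/
import Mathlib


open CategoryTheory CategoryTheory.Limits

/-- If `(g, t) : B ⊞ X ⟶ Z` is a split epimorphism and `Z` has local endomorphism ring,
then `g` is a split epimorphism or `t` is a split epimorphism. -/
theorem split_epi_from_biprod_local {C : Type*} [Category C] [Preadditive C]
    [Limits.HasBinaryBiproducts C] {B X Z : C} (g : B ⟶ Z) (t : X ⟶ Z)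
    (hLocal : IsLocalRing (End Z))
    (h : ∃ s : Z ⟶ B ⊞ X, s ≫ Limits.biprod.desc g t = 𝟙 Z) :
    (∃ s : Z ⟶ B, s ≫ g = 𝟙 Z) ∨ (∃ s : Z ⟶ X, s ≫ t = 𝟙 Z) := by
  obtain ⟨s, hs⟩ := h
  set a : End Z := s ≫ biprod.fst ≫ g with ha
  set b : End Z := s ≫ biprod.snd ≫ t with hb
  have hab : a + b = 1 := by
    rw [ha, hb]
    have : s ≫ biprod.desc g t = s ≫ (biprod.fst ≫ g + biprod.snd ≫ t) := by
      congr 1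
      ext <;> simp
    rw [this, Preadditive.comp_add] at hs
    exact hs
  rcases IsLocalRing.isUnit_or_isUnit_of_add_one hab with hu | hu
  · left
    obtain ⟨u, hu⟩ := hu
    refine ⟨(↑u⁻¹ : End Z) ≫ s ≫ biprod.fst, ?_⟩
    have h1 : a * (↑u⁻¹ : End Z) = 1 := by rw [← hu, Units.mul_inv]
    calc ((↑u⁻¹ : End Z) ≫ s ≫ biprod.fst) ≫ g
        = (↑u⁻¹ : End Z) ≫ a := by rw [ha]; simp [Category.assoc]
      _ = 𝟙 Z := by rw [← End.mul_def] at *; exact h1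
  · right
    obtain ⟨u, hu⟩ := hu
    refine ⟨(↑u⁻¹ : End Z) ≫ s ≫ biprod.snd, ?_⟩
    have h1 : b * (↑u⁻¹ : End Z) = 1 := by rw [← hu, Units.mul_inv]
    calc ((↑u⁻¹ : End Z) ≫ s ≫ biprod.snd) ≫ t
        = (↑u⁻¹ : End Z) ≫ b := by rw [hb]; simp [Category.assoc]
      _ = 𝟙 Z := by rw [← End.mul_def] at *; exact h1
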